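/- For every integer t ∈ ℤ and all i, j ∈ ℕ, the function f_t satisfies the recurrence f_t(i,j) = f_{t-1}(i,j) + f_{t-1}(i+1,j). -/

import Mathlib

/-- Generalized binomial coefficient `C(n,k)` for integers, zero when `k < 0`. -/
noncomputable def genChoose (n k : ℤ) : ℤ :=
  if k < 0 then 0 else Ring.choose n k.toNat

/-- The function `f_t(i,j)` from the characteristic-zero construction. -/
noncomputable def ft (t : ℤ) (i j : ℕ) : ℤ :=
  if 0 < t then genChoose (t - 1) ((j : ℤ) - i - 1)
  else if i < j then (-1) ^ (j - i) * genChoose (-t - 1 + j - i) (-t - 1)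
  else (-1) ^ ((i : ℤ) - j - t).toNat * genChoose ((i : ℤ) - j - 1) (-t)

/-- The block fooling-set matrix `M^(r)` over `ℚ`: block `(a,b)` (0-indexed here,
so `a,b ∈ {0,…,r-1}` correspond to `a+1,b+1` in 1-indexed notation) has height
`r - a` and width `r - b`, with entries `f_{a-b}(i,j)` (1-indexed `i,j`). -/
noncomputable def Mr (r : ℕ) :
    Matrix ((a : Fin r) × Fin (r - a.val)) ((a : Fin r) × Fin (r - a.val)) ℚ :=
  fun x y => (ft ((x.1 : ℤ) - (y.1 : ℤ)) (x.2.val + 1) (y.2.val + 1) : ℚ)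

lemma genChoose_of_neg {n k : ℤ} (h : k < 0) : genChoose n k = 0 := if_pos h

lemma genChoose_of_nonneg {n k : ℤ} (h : 0 ≤ k) :
    genChoose n k = Ring.choose n k.toNat := if_neg (not_lt.mpr h)

lemma genChoose_zero_right (n : ℤ) : genChoose n 0 = 1 := by
  simp [genChoose, Ring.choose_zero_right]

lemma ringChoose_neg_one (k : ℕ) : Ring.choose (-1 : ℤ) k = (-1) ^ k := by
  induction k with
  | zero => simp [Ring.choose_zero_right]
  | succ m ih =>
    have h := Ring.choose_succ_succ (-1 : ℤ) m
    simp only [neg_add_cancel] at h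
    rw [Ring.choose_zero_succ] at h
    have : Ring.choose (-1:ℤ) (m+1) = - Ring.choose (-1:ℤ) m := by linarith
    rw [this, ih]; ring

/-- Pascal's rule for `genChoose`, valid for all integer `k`. -/
lemma genChoose_pascal (n k : ℤ) :
    genChoose n k = genChoose (n - 1) (k - 1) + genChoose (n - 1) k := by
  rcases lt_trichotomy k 0 with hk | hk | hk
  · rw [genChoose_of_neg hk, genChoose_of_neg (by omega), genChoose_of_neg hk]; ring
  · subst hk
    rw [genChoose_zero_right, genChoose_zero_right, genChoose_of_neg (by omega)]; ring
  · obtain ⟨m, hm⟩ : ∃ m : ℕ, k = (m : ℤ) + 1 := ⟨(k - 1).toNat, by omega⟩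
    subst hm
    rw [genChoose_of_nonneg (by omega), genChoose_of_nonneg (by omega),
      genChoose_of_nonneg (by omega)]
    have h1 : ((m : ℤ) + 1).toNat = m + 1 := by omega
    have h2 : ((m : ℤ) + 1 - 1).toNat = m := by omega
    rw [h1, h2]
    have h3 := Ring.choose_succ_succ (n - 1 : ℤ) m
    rw [sub_add_cancel] at h3
    exact h3

theorem ft_recurrence :
    ∀ t : ℤ, ∀ i j : ℕ, 1 ≤ i → 1 ≤ j →
      ft t i j = ft (t - 1) i j + ft (t - 1) (i + 1) j := by
  intro t i j hi hj
  rcases lt_trichotomy t 1 with ht | ht | ht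
  · -- t ≤ 0 : both t and t-1 use the lower branches
    have ht0 : ¬ (0 < t) := by omega
    have ht1 : ¬ (0 < t - 1) := by omega
    obtain ⟨s, rfl⟩ : ∃ s : ℕ, t = -(s : ℤ) := ⟨(-t).toNat, by omega⟩
    rcases Nat.lt_or_ge i j with hij | hij
    · rcases Nat.lt_or_ge (i + 1) j with h2 | h2
      · -- i + 1 < j
        simp only [ft, if_neg ht0, if_neg ht1, if_pos hij, if_pos h2]
        have e1 : -(-(s:ℤ)) - 1 + j - i = (s:ℤ) + j - i - 1 := by ring
        have e2 : -(-(s:ℤ)) - 1 = (s:ℤ) - 1 := by ring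
        have e3 : -(-(s:ℤ) - 1) - 1 + (j:ℤ) - i = (s:ℤ) + j - i := by ring
        have e4 : -(-(s:ℤ) - 1) - 1 = (s:ℤ) := by ring
        have e5 : (s:ℤ) + (j:ℤ) - ((i + 1 : ℕ):ℤ) = (s:ℤ) + j - i - 1 := by
          push_cast; ring
        rw [e1, e2, e3, e4, e5]
        have hP := genChoose_pascal ((s:ℤ) + j - i) s
        have e7 : j - i = (j - (i + 1)) + 1 := by omega
        rw [e7, pow_succ]
        linear_combination ((-1:ℤ)) ^ (j - (i+1)) * hP
      · -- j = i + 1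
        have hj1 : j = i + 1 := by omega
        subst hj1
        have hnot : ¬ (i + 1 < i + 1) := lt_irrefl _
        simp only [ft, if_neg ht0, if_neg ht1, if_pos hij, if_neg hnot]
        have e1 : -(-(s:ℤ)) - 1 + (i + 1 : ℕ) - i = (s:ℤ) := by push_cast; ring
        have e2 : -(-(s:ℤ)) - 1 = (s:ℤ) - 1 := by ring
        have e3 : -(-(s:ℤ) - 1) - 1 + ((i+1 : ℕ):ℤ) - i = (s:ℤ) + 1 := by push_cast; ring
        have e4 : -(-(s:ℤ) - 1) - 1 = (s:ℤ) := by ring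
        have e5 : ((i+1 : ℕ):ℤ) - (i + 1 : ℕ) - (-(s:ℤ) - 1) = (s:ℤ) + 1 := by
          push_cast; ring
        have e6 : ((i+1 : ℕ):ℤ) - ((i+1 : ℕ):ℤ) - (-(s:ℤ)-1) = (s:ℤ)+1 := by ring
        have e7 : (((i+1:ℕ):ℤ) - (i+1:ℕ) - (-(s:ℤ) - 1)).toNat = s + 1 := by
          push_cast; omega
        have e8 : ((i+1 : ℕ):ℤ) - (i + 1 : ℕ) - 1 = (-1 : ℤ) := by push_cast; ring
        have e5' : -(-(s:ℤ) - 1) = (s:ℤ) + 1 := by ring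
        rw [e1, e2, e3, e4, e7, e8, e5']
        have hd : i + 1 - i = 1 := by omega
        rw [hd]
        have hP := genChoose_pascal ((s:ℤ) + 1) s
        rw [show ((s:ℤ) + 1 - 1) = (s:ℤ) from by ring] at hP
        have hss : genChoose (s:ℤ) (s:ℤ) = 1 := by
          rw [genChoose_of_nonneg (by omega), Int.toNat_natCast,
            Ring.choose_natCast, Nat.choose_self, Nat.cast_one]
        have hneg : genChoose (-1 : ℤ) ((s:ℤ) + 1) = (-1) ^ (s + 1) := by
          rw [genChoose_of_nonneg (by omega), show ((s:ℤ)+1).toNat = s + 1 from by omega,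
            ringChoose_neg_one]
        have hsq : ((-1:ℤ)) ^ (s+1) * ((-1:ℤ)) ^ (s+1) = 1 := by
          rw [← mul_pow]; norm_num
        rw [hneg]
        linear_combination hP + hss - hsq
    · -- j ≤ i
      have hnot1 : ¬ (i < j) := by omega
      have hnot2 : ¬ (i + 1 < j) := by omega
      simp only [ft, if_neg ht0, if_neg ht1, if_neg hnot1, if_neg hnot2]
      have e1 : (((i:ℤ) - j - (-(s:ℤ)))).toNat = (i - j) + s := by omega
      have e2 : (((i:ℤ) - j - (-(s:ℤ) - 1))).toNat = (i - j) + s + 1 := by omega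
      have e3 : ((((i+1:ℕ):ℤ) - j - (-(s:ℤ) - 1))).toNat = (i - j) + s + 2 := by
        push_cast; omega
      have e4 : -(-(s:ℤ)) = (s:ℤ) := by ring
      have e5 : -(-(s:ℤ) - 1) = (s:ℤ) + 1 := by ring
      have e6 : ((i+1:ℕ):ℤ) - j - 1 = (i:ℤ) - j := by push_cast; ring
      rw [e1, e2, e3, e4, e5, e6]
      have hP := genChoose_pascal ((i:ℤ) - j) ((s:ℤ) + 1)
      rw [show ((s:ℤ) + 1 - 1) = (s:ℤ) from by ring] at hP
      rw [pow_succ, pow_succ, pow_succ]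
      linear_combination (-((-1:ℤ)^(i - j + s))) * hP
  · -- t = 1
    subst ht
    have ht1 : ¬ ((0:ℤ) < 1 - 1) := by omega
    rcases Nat.lt_or_ge i j with hij | hij
    · rcases Nat.lt_or_ge (i + 1) j with h2 | h2
      · -- i + 1 < j : everything vanishes except LHS C(0, j-i-1) with j-i-1 ≥ 1
        simp only [ft, if_pos (by omega : (0:ℤ) < 1), if_neg ht1, if_pos hij, if_pos h2]
        have e1 : -(1 - 1 : ℤ) - 1 = (-1 : ℤ) := by ring
        rw [e1]
        simp only [genChoose_of_neg (by omega : (-1:ℤ) < 0)]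
        have e2 : genChoose (1 - 1 : ℤ) ((j:ℤ) - i - 1) = 0 := by
          rw [genChoose_of_nonneg (by omega)]
          have : ((j:ℤ) - i - 1).toNat = j - i - 1 := by omega
          rw [this, show (1 - 1 : ℤ) = ((0:ℕ):ℤ) from by norm_num,
            Ring.choose_natCast, Nat.choose_eq_zero_of_lt (by omega), Nat.cast_zero]
        rw [e2]
        simp only [genChoose_of_neg (by omega : (-1:ℤ) < 0), mul_zero, zero_mul, add_zero]
      · -- j = i + 1
        have hj1 : j = i + 1 := by omega
        subst hj1
        have hnot : ¬ (i + 1 < i + 1) := lt_irrefl _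
        simp only [ft, if_pos (by omega : (0:ℤ) < 1), if_neg ht1, if_pos hij, if_neg hnot]
        have e1 : ((i+1:ℕ):ℤ) - i - 1 = 0 := by push_cast; ring
        have e2 : -(1 - 1 : ℤ) - 1 = (-1:ℤ) := by ring
        have e3 : (((i+1:ℕ):ℤ) - (i+1:ℕ) - (1 - 1)).toNat = 0 := by push_cast; omega
        have e4 : ((i+1:ℕ):ℤ) - (i+1:ℕ) - 1 = (-1:ℤ) := by push_cast; ring
        have e5 : -(1 - 1 : ℤ) = 0 := by ring
        rw [e1, e2, e3, e4, e5]
        rw [genChoose_zero_right, genChoose_zero_right, genChoose_of_neg (by omega : (-1:ℤ) < 0)]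
        ring
    · -- j ≤ i
      have hnot1 : ¬ (i < j) := by omega
      have hnot2 : ¬ (i + 1 < j) := by omega
      simp only [ft, if_pos (by omega : (0:ℤ) < 1), if_neg ht1, if_neg hnot1, if_neg hnot2]
      have e1 : (((i:ℤ) - j - (1 - 1))).toNat = i - j := by omega
      have e2 : ((((i+1:ℕ):ℤ) - j - (1 - 1))).toNat = i - j + 1 := by push_cast; omega
      have e3 : -(1 - 1 : ℤ) = 0 := by ring
      have e4 : ((i+1:ℕ):ℤ) - j - 1 = (i:ℤ) - j := by push_cast; ring
      rw [e1, e2, e3, e4]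
      rw [genChoose_zero_right, genChoose_zero_right,
        genChoose_of_neg (by omega : (j:ℤ) - i - 1 < 0)]
      ring
  · -- t ≥ 2 : both positive, plain Pascal
    have ht0 : (0:ℤ) < t := by omega
    have ht1 : (0:ℤ) < t - 1 := by omega
    simp only [ft, if_pos ht0, if_pos ht1]
    have hP := genChoose_pascal (t - 1) ((j:ℤ) - i - 1)
    have e1 : ((j:ℤ) - i - 1 - 1) = (j:ℤ) - (i + 1 : ℕ) - 1 := by push_cast; ring
    rw [e1] at hP
    rw [hP]; ring
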